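/- Let A be an index type and a : (A →₀ ℕ) → ℝ a superexponential admissible positive function. Let f : (A →₀ ℕ) → ℂ with f_0 = 0 and ∑_α |f_α|² a_α^{−p} < ∞ for some p ∈ ℕ. Then ‖f‖_q² = ∑_α |f_α|² a_α^{−q} tends to 0 as q → ∞; in particular, for every M > 0 there exists q ∈ ℕ with ‖f‖_q < M. -/

import Mathlib

open scoped ENNReal

/-- The squared weighted `ℓ²`-norm `‖f‖_p² = ∑' α, |f α|² a α ^ (-p)`, as a sum in `[0,∞]`. -/
noncomputable def wsum {A : Type*} (a : (A →₀ ℕ) → ℝ) (p : ℕ) (f : (A →₀ ℕ) → ℂ) : ℝ≥0∞ :=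
  ∑' α, ENNReal.ofReal (‖f α‖ ^ 2 / (a α) ^ p)

/-- If `a` is a superexponential admissible positive function and `f` has vanishing
generalized expectation `f 0 = 0` and finite `‖f‖_p` for some `p`, then `‖f‖_q² → 0`
as `q → ∞`; in particular, for every `M > 0` there is `q` with `‖f‖_q < M`. -/
theorem wsum_tendsto_zero_of_expectation_zero
    {A : Type*} (a : (A →₀ ℕ) → ℝ)
    (hpos : ∀ α, 0 < a α)
    (h0 : a 0 = 1)
    (hgen : ∀ n : A, 1 < a (Finsupp.single n 1))
    (hsup : ∀ α β : A →₀ ℕ, a α * a β ≤ a (α + β))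
    (f : (A →₀ ℕ) → ℂ) (hf0 : f 0 = 0)
    (p : ℕ) (hf : wsum a p f < ⊤) :
    Filter.Tendsto (fun q : ℕ => wsum a q f) Filter.atTop (nhds 0) ∧
    ∀ M : ℝ, 0 < M → ∃ q : ℕ, (wsum a q f) ^ (2⁻¹ : ℝ) < ENNReal.ofReal M := by
  classical
  -- singles have weight ≥ 1, and > 1 when nonzero
  have hsingle1 : ∀ (n : A) (b : ℕ), 1 ≤ a (Finsupp.single n b) := by
    intro n b
    induction b with
    | zero => simp [h0]
    | succ k ih =>
      have heq : Finsupp.single n (k + 1) = Finsupp.single n k + Finsupp.single n 1 := by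
        rw [← Finsupp.single_add]
      rw [heq]
      calc (1 : ℝ) ≤ a (Finsupp.single n k) * a (Finsupp.single n 1) := by
            nlinarith [ih, (hgen n).le]
        _ ≤ a (Finsupp.single n k + Finsupp.single n 1) := hsup _ _
  have hsinglegt : ∀ (n : A) (b : ℕ), b ≠ 0 → 1 < a (Finsupp.single n b) := by
    intro n b hb
    cases b with
    | zero => exact absurd rfl hb
    | succ k =>
      have heq : Finsupp.single n (k + 1) = Finsupp.single n k + Finsupp.single n 1 := by
        rw [← Finsupp.single_add]
      rw [heq]
      calc (1 : ℝ) < a (Finsupp.single n k) * a (Finsupp.single n 1) := by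
            nlinarith [hsingle1 n k, hgen n, hpos (Finsupp.single n k)]
        _ ≤ a (Finsupp.single n k + Finsupp.single n 1) := hsup _ _
  have hone : ∀ α : A →₀ ℕ, 1 ≤ a α := by
    intro α
    induction α using Finsupp.induction with
    | zero => simp [h0]
    | single_add n b g hn hb ih =>
      calc (1 : ℝ) ≤ a (Finsupp.single n b) * a g := by
            nlinarith [hsingle1 n b, ih, hpos g]
        _ ≤ a (Finsupp.single n b + g) := hsup _ _
  have hlt : ∀ α : A →₀ ℕ, α ≠ 0 → 1 < a α := by
    intro α
    induction α using Finsupp.induction with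
    | zero => intro h; exact absurd rfl h
    | single_add n b g hn hb ih =>
      intro _
      calc (1 : ℝ) < a (Finsupp.single n b) * a g := by
            nlinarith [hsinglegt n b hb, hone g, hpos g]
        _ ≤ a (Finsupp.single n b + g) := hsup _ _
  -- main convergence
  have key : Filter.Tendsto (fun q : ℕ => wsum a q f) Filter.atTop (nhds 0) := by
    rw [← Filter.tendsto_add_atTop_iff_nat p]
    letI : MeasurableSpace (A →₀ ℕ) := ⊤
    haveI : MeasurableSingletonClass (A →₀ ℕ) := ⟨fun _ => trivial⟩
    have hmain := MeasureTheory.tendsto_lintegral_of_dominated_convergence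
      (μ := MeasureTheory.Measure.count)
      (F := fun (q : ℕ) (α : A →₀ ℕ) => ENNReal.ofReal (‖f α‖ ^ 2 / a α ^ (q + p)))
      (f := fun _ => (0 : ℝ≥0∞))
      (bound := fun α => ENNReal.ofReal (‖f α‖ ^ 2 / a α ^ p))
      (fun n => measurable_from_top)
      (by
        intro q
        refine Filter.Eventually.of_forall (fun α => ?_)
        apply ENNReal.ofReal_le_ofReal
        gcongr
        · exact pow_pos (hpos α) p
        · exact hone α
        · exact Nat.le_add_left p q)
      (by
        rw [MeasureTheory.lintegral_count]
        exact hf.ne)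
      (by
        refine Filter.Eventually.of_forall (fun α => ?_)
        by_cases hα : α = 0
        · subst hα
          simp [hf0]
        · have h1 : Filter.Tendsto (fun q : ℕ => ‖f α‖ ^ 2 / a α ^ q)
              Filter.atTop (nhds 0) := by
            have hinv : (a α)⁻¹ < 1 := by
              rw [inv_lt_one_iff₀]; right; exact hlt α hα
            have h2 := tendsto_pow_atTop_nhds_zero_of_lt_one
              (inv_nonneg.mpr (hpos α).le) hinv
            have h3 := h2.const_mul (‖f α‖ ^ 2)
            simp only [mul_zero] at h3
            convert h3 using 2 with q
            rw [div_eq_mul_inv, inv_pow]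
          have h4 : Filter.Tendsto (fun q : ℕ => q + p) Filter.atTop Filter.atTop :=
            Filter.tendsto_add_atTop_nat p
          have h5 := (ENNReal.tendsto_ofReal (h1.comp h4))
          simpa using h5)
    simp only [MeasureTheory.lintegral_count, MeasureTheory.lintegral_zero] at hmain
    exact hmain
  refine ⟨key, fun M hM => ?_⟩
  have hε : (0 : ℝ≥0∞) < ENNReal.ofReal M ^ 2 := by
    have : (0 : ℝ≥0∞) < ENNReal.ofReal M := ENNReal.ofReal_pos.mpr hM
    positivity
  have hev := key.eventually_lt_const hε
  obtain ⟨q, hq⟩ := hev.exists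
  refine ⟨q, ?_⟩
  have := ENNReal.rpow_lt_rpow hq (by norm_num : (0:ℝ) < 2⁻¹)
  have heq : (ENNReal.ofReal M ^ 2) ^ (2⁻¹ : ℝ) = ENNReal.ofReal M := by
    rw [← ENNReal.rpow_natCast (ENNReal.ofReal M) 2, ← ENNReal.rpow_mul]
    norm_num
  rwa [heq] at this
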